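/- Let r₁, r₂ > 0 and 0 < φ₂ < φ₁ ≤ π be real numbers, and define f : [0, ∞) → ℝ by f(t) = arccos((t·r₁·cos φ₁ + r₂·cos φ₂)/√(t²·r₁² + r₂² + 2·t·r₁·r₂·cos(φ₁ − φ₂))). Then f is strictly increasing on [0, ∞), f(0) = φ₂, φ₂ ≤ f(t) < φ₁ for every t ≥ 0, and f(t) → φ₁ as t → ∞. -/

import Mathlib

open Real

lemma key_arccos (x y : ℝ) (hy : 0 < y) :
    Real.arccos (x / Real.sqrt (x ^ 2 + y ^ 2)) = π / 2 - Real.arctan (x / y) := by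
  have h1 : Real.sqrt (x ^ 2 + y ^ 2) = y * Real.sqrt ((x / y) ^ 2 + 1) := by
    rw [show x ^ 2 + y ^ 2 = y ^ 2 * ((x / y) ^ 2 + 1) by field_simp,
      Real.sqrt_mul (sq_nonneg y), Real.sqrt_sq hy.le]
  have h2 : x / Real.sqrt (x ^ 2 + y ^ 2) = (x / y) / Real.sqrt ((x / y) ^ 2 + 1) := by
    rw [h1, ← div_div]
  rw [h2]
  have h3 : (x / y) / Real.sqrt ((x / y) ^ 2 + 1) = Real.cos (π / 2 - Real.arctan (x / y)) := by
    rw [Real.cos_pi_div_two_sub, Real.sin_arctan, add_comm]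
  rw [h3, Real.arccos_cos]
  · linarith [Real.arctan_lt_pi_div_two (x / y)]
  · linarith [Real.neg_pi_div_two_lt_arctan (x / y)]

/-- Let `r₁, r₂ > 0` and `0 < φ₂ < φ₁ ≤ π`, and let
`f(t) = arccos((t·r₁·cos φ₁ + r₂·cos φ₂)/√(t²·r₁² + r₂² + 2·t·r₁·r₂·cos(φ₁ − φ₂)))`.
Then `f` is strictly increasing on `[0, ∞)`, `f(0) = φ₂`, `φ₂ ≤ f(t) < φ₁` for all
`t ≥ 0`, and `f(t) → φ₁` as `t → ∞`. -/
theorem stmt_10 (r₁ r₂ φ₁ φ₂ : ℝ) (hr₁ : 0 < r₁) (hr₂ : 0 < r₂)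
    (hφ₂ : 0 < φ₂) (hφ : φ₂ < φ₁) (hφ₁ : φ₁ ≤ π)
    (f : ℝ → ℝ)
    (hf : ∀ t : ℝ, f t = Real.arccos ((t * r₁ * Real.cos φ₁ + r₂ * Real.cos φ₂) /
      Real.sqrt (t ^ 2 * r₁ ^ 2 + r₂ ^ 2 + 2 * t * r₁ * r₂ * Real.cos (φ₁ - φ₂)))) :
    StrictMonoOn f (Set.Ici (0 : ℝ)) ∧ f 0 = φ₂ ∧
    (∀ t : ℝ, 0 ≤ t → φ₂ ≤ f t ∧ f t < φ₁) ∧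
    Filter.Tendsto f Filter.atTop (nhds φ₁) := by
  set x : ℝ → ℝ := fun t => t * r₁ * Real.cos φ₁ + r₂ * Real.cos φ₂ with hx
  set y : ℝ → ℝ := fun t => t * r₁ * Real.sin φ₁ + r₂ * Real.sin φ₂ with hyd
  have hφ₂π : φ₂ < π := lt_of_lt_of_le hφ hφ₁
  have hs2 : 0 < Real.sin φ₂ := Real.sin_pos_of_pos_of_lt_pi hφ₂ hφ₂π
  have hs1 : 0 ≤ Real.sin φ₁ := Real.sin_nonneg_of_nonneg_of_le_pi (by linarith) hφ₁
  have hsin : 0 < Real.sin φ₁ * Real.cos φ₂ - Real.cos φ₁ * Real.sin φ₂ := by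
    have := Real.sin_pos_of_pos_of_lt_pi (x := φ₁ - φ₂) (by linarith) (by linarith)
    rwa [Real.sin_sub] at this
  have hy : ∀ t : ℝ, 0 ≤ t → 0 < y t := fun t ht => by
    have : 0 ≤ t * r₁ * Real.sin φ₁ := by positivity
    have : 0 < r₂ * Real.sin φ₂ := by positivity
    simp only [hyd]; linarith
  have hsum : ∀ t : ℝ, t ^ 2 * r₁ ^ 2 + r₂ ^ 2 + 2 * t * r₁ * r₂ * Real.cos (φ₁ - φ₂)
      = (x t) ^ 2 + (y t) ^ 2 := by
    intro t
    simp only [hx, hyd]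
    rw [Real.cos_sub]
    linear_combination (-(t ^ 2 * r₁ ^ 2)) * (Real.sin_sq_add_cos_sq φ₁) +
      (-(r₂ ^ 2)) * (Real.sin_sq_add_cos_sq φ₂)
  have hfe : ∀ t : ℝ, 0 ≤ t → f t = π / 2 - Real.arctan (x t / y t) := by
    intro t ht
    rw [hf t, hsum t, key_arccos _ _ (hy t ht)]
  have hmono : StrictMonoOn f (Set.Ici (0 : ℝ)) := by
    intro s hs t ht hst
    rw [hfe s hs, hfe t ht]
    have hlt : x t / y t < x s / y s := by
      rw [div_lt_div_iff₀ (hy t ht) (hy s hs)]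
      simp only [hx, hyd]
      nlinarith [mul_pos (mul_pos (sub_pos.mpr hst) (mul_pos hr₁ hr₂)) hsin]
    have := Real.arctan_strictMono hlt
    linarith
  have hf0 : f 0 = φ₂ := by
    rw [hf 0]
    have h0 : (0 : ℝ) ^ 2 * r₁ ^ 2 + r₂ ^ 2 + 2 * 0 * r₁ * r₂ * Real.cos (φ₁ - φ₂) = r₂ ^ 2 := by
      ring
    rw [h0, Real.sqrt_sq hr₂.le]
    rw [show (0 : ℝ) * r₁ * Real.cos φ₁ + r₂ * Real.cos φ₂ = r₂ * Real.cos φ₂ by ring]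
    rw [mul_comm r₂ (Real.cos φ₂), mul_div_assoc, div_self hr₂.ne', mul_one,
      Real.arccos_cos hφ₂.le hφ₂π.le]
  have hbound : ∀ t : ℝ, 0 ≤ t → φ₂ ≤ f t ∧ f t < φ₁ := by
    intro t ht
    constructor
    · rw [← hf0]
      exact hmono.monotoneOn (Set.mem_Ici.mpr le_rfl) (Set.mem_Ici.mpr ht) ht
    · rw [hfe t ht]
      rcases lt_or_eq_of_le hφ₁ with h | h
      · have hsin1 : 0 < Real.sin φ₁ := Real.sin_pos_of_pos_of_lt_pi (by linarith) h
        have htan : Real.arctan (Real.cos φ₁ / Real.sin φ₁) = π / 2 - φ₁ := by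
          rw [show Real.cos φ₁ / Real.sin φ₁ = Real.tan (π / 2 - φ₁) by
            rw [Real.tan_eq_sin_div_cos, Real.sin_pi_div_two_sub, Real.cos_pi_div_two_sub]]
          exact Real.arctan_tan (by linarith [Real.pi_pos]) (by linarith)
        have h2 : Real.cos φ₁ / Real.sin φ₁ < x t / y t := by
          rw [div_lt_div_iff₀ hsin1 (hy t ht)]
          simp only [hx, hyd]
          nlinarith [mul_pos hr₂ hsin]
        have := Real.arctan_strictMono h2
        rw [htan] at this
        linarith
      · have := Real.neg_pi_div_two_lt_arctan (x t / y t)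
        rw [← h]
        linarith
  refine ⟨hmono, hf0, hbound, ?_⟩
  have hev : ∀ᶠ t in Filter.atTop, π / 2 - Real.arctan (x t / y t) = f t := by
    filter_upwards [Filter.eventually_ge_atTop (0 : ℝ)] with t ht
    exact (hfe t ht).symm
  refine Filter.Tendsto.congr' hev ?_
  rcases lt_or_eq_of_le hφ₁ with h | h
  · -- sin φ₁ > 0 : x t / y t → cos φ₁ / sin φ₁
    have hsin1 : 0 < Real.sin φ₁ := Real.sin_pos_of_pos_of_lt_pi (by linarith) h
    have hratio : Filter.Tendsto (fun t => x t / y t) Filter.atTop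
        (nhds (Real.cos φ₁ / Real.sin φ₁)) := by
      have hlim : Filter.Tendsto
          (fun t : ℝ => (r₁ * Real.cos φ₁ + r₂ * Real.cos φ₂ * t⁻¹) /
            (r₁ * Real.sin φ₁ + r₂ * Real.sin φ₂ * t⁻¹)) Filter.atTop
          (nhds ((r₁ * Real.cos φ₁ + r₂ * Real.cos φ₂ * 0) /
            (r₁ * Real.sin φ₁ + r₂ * Real.sin φ₂ * 0))) := by
        apply Filter.Tendsto.div
        · exact tendsto_const_nhds.add (tendsto_const_nhds.mul tendsto_inv_atTop_zero)
        · exact tendsto_const_nhds.add (tendsto_const_nhds.mul tendsto_inv_atTop_zero)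
        · simp only [mul_zero, add_zero]; positivity
      have heq : (r₁ * Real.cos φ₁ + r₂ * Real.cos φ₂ * 0) /
          (r₁ * Real.sin φ₁ + r₂ * Real.sin φ₂ * 0) = Real.cos φ₁ / Real.sin φ₁ := by
        rw [mul_zero, mul_zero, add_zero, add_zero, mul_div_mul_left _ _ hr₁.ne']
      rw [heq] at hlim
      refine Filter.Tendsto.congr' ?_ hlim
      filter_upwards [Filter.eventually_gt_atTop (0 : ℝ)] with t ht
      simp only [hx, hyd]
      have hd1 : (0:ℝ) < t * r₁ * Real.sin φ₁ + r₂ * Real.sin φ₂ := by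
        nlinarith [mul_pos (mul_pos ht hr₁) hsin1, mul_pos hr₂ hs2]
      have hd2 : (0:ℝ) < r₁ * Real.sin φ₁ + r₂ * Real.sin φ₂ * t⁻¹ := by
        have hti : 0 < t⁻¹ := inv_pos.mpr ht
        nlinarith [mul_pos hr₁ hsin1, mul_pos (mul_pos hr₂ hs2) hti]
      rw [div_eq_div_iff hd2.ne' hd1.ne']
      field_simp
    have harctan : Real.arctan (Real.cos φ₁ / Real.sin φ₁) = π / 2 - φ₁ := by
      rw [show Real.cos φ₁ / Real.sin φ₁ = Real.tan (π / 2 - φ₁) by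
        rw [Real.tan_eq_sin_div_cos, Real.sin_pi_div_two_sub, Real.cos_pi_div_two_sub]]
      exact Real.arctan_tan (by linarith [Real.pi_pos]) (by linarith)
    have := (Real.continuous_arctan.tendsto _).comp hratio
    rw [harctan] at this
    have := Filter.Tendsto.const_sub (π / 2) this
    simpa using this
  · -- φ₁ = π : x t / y t → -∞
    have hc1 : Real.cos φ₁ = -1 := by rw [h, Real.cos_pi]
    have hs1' : Real.sin φ₁ = 0 := by rw [h, Real.sin_pi]
    have hratio : Filter.Tendsto (fun t => x t / y t) Filter.atTop Filter.atBot := by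
      have heq : ∀ t : ℝ, x t / y t = (t * r₁ * (-1) + r₂ * Real.cos φ₂) / (r₂ * Real.sin φ₂) := by
        intro t; simp only [hx, hyd, hc1, hs1', mul_zero, zero_add]
      simp only [heq]
      apply Filter.Tendsto.atBot_div_const (by positivity)
      apply Filter.tendsto_atBot_add_const_right
      have h1 : Filter.Tendsto (fun t : ℝ => t * r₁) Filter.atTop Filter.atTop :=
        Filter.Tendsto.atTop_mul_const hr₁ Filter.tendsto_id
      exact h1.atTop_mul_const_of_neg (by norm_num : (-1 : ℝ) < 0)
    have h2 := Real.tendsto_arctan_atBot.mono_right nhdsWithin_le_nhds |>.comp hratio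
    have h3 := Filter.Tendsto.const_sub (π / 2) h2
    rw [show φ₁ = π / 2 - -(π / 2) by rw [h]; ring]
    simpa using h3
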